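/- Let δ ∈ (1/2, 1]. Then the Bellman function Φ is given by the explicit formula Φ(x) = (1 − x)/δ for all x ∈ [δ, 1]. -/

import Mathlib

noncomputable section

/-- An admissible sequence for the Bellman problem: `s 0 = x`, all terms lie in `[δ, 1]`,
and `s (n+1) ≥ 1 - s n + δ`. -/
def Adm (δ x : ℝ) (s : ℕ → ℝ) : Prop :=
  s 0 = x ∧ (∀ n, s n ∈ Set.Icc δ 1) ∧ ∀ n, 1 - s n + δ ≤ s (n + 1)

/-- The Bellman function `Φ`. -/
def Phi (δ x : ℝ) : ℝ :=
  sSup {r : ℝ | ∃ s : ℕ → ℝ, Adm δ x s ∧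
    r = ∑' n : ℕ, ∏ i ∈ Finset.range (n + 1), (1 - s i) / s i}

namespace BellmanAux

/-- The optimal (equality) sequence. -/
def seq (δ x : ℝ) : ℕ → ℝ
  | 0 => x
  | n + 1 => 1 - seq δ x n + δ

variable {δ x : ℝ}

lemma seq_mem (hx : x ∈ Set.Icc δ 1) : ∀ n, seq δ x n ∈ Set.Icc δ 1 := by
  intro n
  induction n with
  | zero => exact hx
  | succ n ih =>
    obtain ⟨h1, h2⟩ := ih
    exact ⟨by simp [seq]; linarith, by simp [seq]; linarith⟩

lemma adm_seq (hx : x ∈ Set.Icc δ 1) : Adm δ x (seq δ x) :=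
  ⟨rfl, seq_mem hx, fun n => le_of_eq rfl⟩

lemma term_nonneg (hδ : (1/2 : ℝ) < δ) {s : ℕ → ℝ} (hm : ∀ n, s n ∈ Set.Icc δ 1) (i : ℕ) :
    0 ≤ (1 - s i) / s i := by
  obtain ⟨h1, h2⟩ := hm i
  have : 0 < s i := by linarith
  exact div_nonneg (by linarith) this.le

lemma prod_nonneg' (hδ : (1/2 : ℝ) < δ) {s : ℕ → ℝ} (hm : ∀ n, s n ∈ Set.Icc δ 1) (N : ℕ) :
    0 ≤ ∏ i ∈ Finset.range N, (1 - s i) / s i :=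
  Finset.prod_nonneg fun i _ => term_nonneg hδ hm i

/-- The key invariant for an arbitrary admissible sequence. -/
lemma key (hδ : (1/2 : ℝ) < δ) {s : ℕ → ℝ} (hs : Adm δ x s) (N : ℕ) :
    (∑ n ∈ Finset.range N, ∏ i ∈ Finset.range (n + 1), (1 - s i) / s i)
      + (∏ i ∈ Finset.range N, (1 - s i) / s i) * ((1 - s N) / δ) ≤ (1 - x) / δ := by
  obtain ⟨h0, hm, hc⟩ := hs
  have hδ0 : (0:ℝ) < δ := by linarith
  induction N with
  | zero => simp [h0]
  | succ N ih =>
    rw [Finset.sum_range_succ, Finset.prod_range_succ]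
    have hP := prod_nonneg' hδ hm N
    have hN := hm N
    have hN1 := hm (N+1)
    have hcN := hc N
    have hsN : (0:ℝ) < s N := by have := hN.1; linarith
    -- reduce to the scalar inequality
    have hmain : (1 - s N) / s N + (1 - s N) / s N * ((1 - s (N+1)) / δ)
        ≤ (1 - s N) / δ := by
      have heq : (1 - s N) / s N + (1 - s N) / s N * ((1 - s (N+1)) / δ)
          = ((1 - s N) * (δ + (1 - s (N+1)))) / (s N * δ) := by
        field_simp
      rw [heq, div_le_div_iff₀ (by positivity) hδ0]
      have h1 : 0 ≤ 1 - s N := by linarith [hN.2]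
      have h2 : δ + (1 - s (N+1)) ≤ s N := by linarith
      nlinarith [mul_le_mul_of_nonneg_left h2 h1]
    have hmul := mul_le_mul_of_nonneg_left hmain hP
    nlinarith [ih, hmul]

/-- Equality version of the invariant for the optimal sequence. -/
lemma key_eq (hδ : (1/2 : ℝ) < δ) (hx : x ∈ Set.Icc δ 1) (N : ℕ) :
    (∑ n ∈ Finset.range N, ∏ i ∈ Finset.range (n + 1), (1 - seq δ x i) / seq δ x i)
      = (1 - x) / δ
        - (∏ i ∈ Finset.range N, (1 - seq δ x i) / seq δ x i) * ((1 - seq δ x N) / δ) := by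
  have hδ0 : (0:ℝ) < δ := by linarith
  induction N with
  | zero => simp [seq]
  | succ N ih =>
    rw [Finset.sum_range_succ, Finset.prod_range_succ, ih]
    have hsN : (0:ℝ) < seq δ x N := by have := (seq_mem hx N).1; linarith
    have hstep : seq δ x (N+1) = 1 - seq δ x N + δ := rfl
    rw [hstep]
    have hne : seq δ x N ≠ 0 := ne_of_gt hsN
    set P := ∏ i ∈ Finset.range N, (1 - seq δ x i) / seq δ x i with hPdef
    field_simp
    ring

end BellmanAux

open BellmanAux in
theorem bellman_formula (δ : ℝ) (hδ : δ ∈ Set.Ioc (1 / 2 : ℝ) 1) (x : ℝ)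
    (hx : x ∈ Set.Icc δ 1) :
    Phi δ x = (1 - x) / δ := by
  obtain ⟨hδ1, hδ2⟩ := hδ
  have hδ0 : (0:ℝ) < δ := by linarith
  -- the optimal sequence achieves the value (1-x)/δ
  have hach : (∑' n : ℕ, ∏ i ∈ Finset.range (n + 1), (1 - seq δ x i) / seq δ x i)
      = (1 - x) / δ := by
    set t : ℕ → ℝ := fun n => ∏ i ∈ Finset.range (n + 1), (1 - seq δ x i) / seq δ x i with ht
    have htn : ∀ n, 0 ≤ t n := fun n => prod_nonneg' hδ1 (seq_mem hx) (n+1)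
    have hbound : ∀ N, ∑ n ∈ Finset.range N, t n ≤ (1 - x) / δ := by
      intro N
      have := key (x := x) hδ1 (adm_seq hx) N
      have hP := prod_nonneg' hδ1 (seq_mem hx) N
      have hN := (seq_mem hx N)
      have : 0 ≤ (∏ i ∈ Finset.range N, (1 - seq δ x i) / seq δ x i) * ((1 - seq δ x N) / δ) := by
        apply mul_nonneg hP
        apply div_nonneg (by linarith [hN.2]) hδ0.le
      linarith [key (x := x) hδ1 (adm_seq hx) N]
    have hsum : Summable t := summable_of_sum_range_le htn hbound
    -- partial sums tend to (1-x)/δ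
    have hr : (0:ℝ) ≤ (1 - δ)/δ := div_nonneg (by linarith) hδ0.le
    have hr1 : (1 - δ)/δ < 1 := by rw [div_lt_one hδ0]; linarith
    have hfac : ∀ i, (1 - seq δ x i) / seq δ x i ≤ (1 - δ)/δ := by
      intro i
      obtain ⟨h1, h2⟩ := seq_mem hx i
      apply div_le_div₀ (by linarith) (by linarith) hδ0 h1
    have hprodle : ∀ N, ∏ i ∈ Finset.range N, (1 - seq δ x i) / seq δ x i ≤ ((1-δ)/δ)^N := by
      intro N
      calc ∏ i ∈ Finset.range N, (1 - seq δ x i) / seq δ x i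
          ≤ ∏ _i ∈ Finset.range N, (1-δ)/δ :=
            Finset.prod_le_prod (fun i _ => term_nonneg hδ1 (seq_mem hx) i) (fun i _ => hfac i)
        _ = ((1-δ)/δ)^N := by simp [div_pow]
    have htend : Filter.Tendsto
        (fun N => (∏ i ∈ Finset.range N, (1 - seq δ x i) / seq δ x i) * ((1 - seq δ x N) / δ))
        Filter.atTop (nhds 0) := by
      have h1 : Filter.Tendsto (fun N : ℕ => ((1-δ)/δ)^N * ((1-δ)/δ)) Filter.atTop (nhds 0) := by
        simpa using (tendsto_pow_atTop_nhds_zero_of_lt_one hr hr1).mul_const ((1-δ)/δ)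
      refine squeeze_zero (fun N => ?_) (fun N => ?_) h1
      · exact mul_nonneg (prod_nonneg' hδ1 (seq_mem hx) N)
          (div_nonneg (by linarith [(seq_mem hx N).2]) hδ0.le)
      · exact mul_le_mul (hprodle N)
          (div_le_div₀ (by linarith) (by linarith [(seq_mem hx N).1]) hδ0 le_rfl)
          (div_nonneg (by linarith [(seq_mem hx N).2]) hδ0.le) (pow_nonneg hr N)
    have hpartial : Filter.Tendsto (fun N => ∑ n ∈ Finset.range N, t n)
        Filter.atTop (nhds ((1 - x)/δ)) := by
      have : (fun N => ∑ n ∈ Finset.range N, t n)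
          = fun N => (1 - x)/δ -
            (∏ i ∈ Finset.range N, (1 - seq δ x i) / seq δ x i) * ((1 - seq δ x N) / δ) := by
        funext N; exact key_eq hδ1 hx N
      rw [this]
      simpa using (tendsto_const_nhds (x := (1-x)/δ) (f := Filter.atTop (α := ℕ))).sub htend
    exact tendsto_nhds_unique hsum.hasSum.tendsto_sum_nat hpartial
  -- conclude
  have hgreat : IsGreatest {r : ℝ | ∃ s : ℕ → ℝ, Adm δ x s ∧
      r = ∑' n : ℕ, ∏ i ∈ Finset.range (n + 1), (1 - s i) / s i} ((1 - x)/δ) := by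
    constructor
    · exact ⟨seq δ x, adm_seq hx, hach.symm⟩
    · rintro r ⟨s, hs, rfl⟩
      apply Real.tsum_le_of_sum_range_le
        (fun n => prod_nonneg' hδ1 hs.2.1 (n+1))
      intro N
      have hk := key (x := x) hδ1 hs N
      have hP := prod_nonneg' hδ1 hs.2.1 N
      have : 0 ≤ (∏ i ∈ Finset.range N, (1 - s i) / s i) * ((1 - s N) / δ) :=
        mul_nonneg hP (div_nonneg (by linarith [(hs.2.1 N).2]) hδ0.le)
      linarith
  unfold Phi
  exact hgreat.csSup_eq
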